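/- Let ω > 0, κ ≥ 0 be reals, let α > 0 and α', β, β' be reals, and let n, m ∈ ℕ. Define the density ϱ(r) = (α / ω^{α'}) · (ω^{β'−α'} · r^{2(α−β)})^{κ·m} · r^{2(α−1)} · exp(−r^{2α} / ω^{α'}) for r > 0. Then the generalized moment identity 2 ∫_0^∞ ϱ(r) · r^{2(α·n + β·κ·m) + 1} / ω^{α'·n + β'·κ·m} dr = Γ(1 + κ·m + n) holds, where Γ(1 + κ·m + n) = Γ(γ + n) with γ = 1 + κ·m. (This is the solution of the generalized moment problem for the sub-classes of γ-deformed second-class coherent states with one degree of freedom.) -/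

import Mathlib

open MeasureTheory

/-- Solution of the generalized moment problem for the sub-classes of `γ`-deformed
second-class coherent states with one degree of freedom: the density
`ϱ(r) = (α/ω^α') (ω^(β'-α') r^(2(α-β)))^(κm) r^(2(α-1)) exp(-r^(2α)/ω^α')` satisfies
`2 ∫₀^∞ ϱ(r) r^(2(αn+βκm)+1) / ω^(α'n+β'κm) dr = Γ(1+κm+n)`. -/
theorem generalized_moment_problem_second_class (ω κ α α' β β' : ℝ)
    (hω : 0 < ω) (hκ : 0 ≤ κ) (hα : 0 < α) (n m : ℕ) :
    2 * ∫ r in Set.Ioi (0 : ℝ),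
        ((α / ω ^ α') * (ω ^ (β' - α') * r ^ (2 * (α - β))) ^ (κ * m) *
            r ^ (2 * (α - 1)) * Real.exp (-(r ^ (2 * α)) / ω ^ α')) *
          (r ^ (2 * (α * n + β * κ * m) + 1) / ω ^ (α' * n + β' * κ * m))
      = Real.Gamma (1 + κ * m + n) := by
  set s : ℝ := 1 + κ * m + n with hs_def
  have hs : 0 < s := by positivity
  have key : ∫ r in Set.Ioi (0 : ℝ),
        ((α / ω ^ α') * (ω ^ (β' - α') * r ^ (2 * (α - β))) ^ (κ * m) *
            r ^ (2 * (α - 1)) * Real.exp (-(r ^ (2 * α)) / ω ^ α')) *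
          (r ^ (2 * (α * n + β * κ * m) + 1) / ω ^ (α' * n + β' * κ * m))
      = ∫ r in Set.Ioi (0 : ℝ),
        (α * ω ^ (-(α' * s))) *
          (r ^ (2 * α * s - 1) * Real.exp (-(ω ^ (-α')) * r ^ (2 * α))) := by
    refine setIntegral_congr_fun measurableSet_Ioi (fun r hr => ?_)
    have hr : (0 : ℝ) < r := hr
    have h1 : (ω ^ (β' - α') * r ^ (2 * (α - β))) ^ (κ * m)
        = ω ^ ((β' - α') * (κ * m)) * r ^ (2 * (α - β) * (κ * m)) := by
      rw [Real.mul_rpow (by positivity) (by positivity), ← Real.rpow_mul hω.le,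
        ← Real.rpow_mul hr.le]
    have h2 : Real.exp (-(r ^ (2 * α)) / ω ^ α')
        = Real.exp (-(ω ^ (-α')) * r ^ (2 * α)) := by
      rw [Real.rpow_neg hω.le]
      ring_nf
    have he1 : 2 * (α - β) * (κ * m) + 2 * (α - 1) + (2 * (α * n + β * κ * m) + 1)
        = 2 * α * s - 1 := by simp only [hs_def]; ring
    have he2 : -α' + (β' - α') * (κ * m) + -(α' * n + β' * κ * m) = -(α' * s) := by
      simp only [hs_def]; ring
    have hr3 : r ^ (2 * (α - β) * (κ * m)) * r ^ (2 * (α - 1)) *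
        r ^ (2 * (α * n + β * κ * m) + 1) = r ^ (2 * α * s - 1) := by
      rw [← Real.rpow_add hr, ← Real.rpow_add hr, he1]
    have hω3 : ω ^ (-α') * ω ^ ((β' - α') * (κ * m)) * ω ^ (-(α' * n + β' * κ * m))
        = ω ^ (-(α' * s)) := by
      rw [← Real.rpow_add hω, ← Real.rpow_add hω, he2]
    rw [h1, h2, div_eq_mul_inv α, ← Real.rpow_neg hω.le,
      div_eq_mul_inv _ (ω ^ (α' * n + β' * κ * m)), ← Real.rpow_neg hω.le,
      ← hr3, ← hω3]
    ring
  rw [key, integral_const_mul,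
    integral_rpow_mul_exp_neg_mul_rpow (by positivity) (by nlinarith [mul_pos hα hs])
      (by positivity : (0:ℝ) < ω ^ (-α'))]
  have h2α : (2 * α) ≠ 0 := by positivity
  have h3 : -(2 * α * s - 1 + 1) / (2 * α) = -s := by rw [div_eq_iff h2α]; ring
  have h4 : (2 * α * s - 1 + 1) / (2 * α) = s := by rw [div_eq_iff h2α]; ring
  rw [h3, h4, ← Real.rpow_mul hω.le, show -α' * -s = α' * s from by ring]
  have hω1 : ω ^ (-(α' * s)) * ω ^ (α' * s) = 1 := by
    rw [← Real.rpow_add hω]; norm_num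
  have hα' : α ≠ 0 := hα.ne'
  field_simp
  linear_combination hω1
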